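/- Let n ∈ ℕ, let v₀, v₁, …, vₙ be n + 1 points of a real normed vector space, let c := (1/(n+1)) · (v₀ + v₁ + ⋯ + vₙ) be their barycenter, and let h ≥ 0 satisfy ‖vᵢ − vⱼ‖ ≤ h for all 0 ≤ i, j ≤ n. Then every point x in the convex hull of {v₀, v₁, …, vₙ} satisfies ‖x − c‖ ≤ (n/(n+1)) · h. -/
import Mathlib


/-- Geometric ingredient of Lemma 7 (appendix): if `n + 1` points of a real
normed space have mutual distances at most `h`, then every point of their
convex hull is within distance `(n/(n+1)) h` of their barycenter. -/
theorem dist_barycenter_le_of_mem_convexHull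
    {V : Type*} [NormedAddCommGroup V] [NormedSpace ℝ V]
    (n : ℕ) (v : Fin (n + 1) → V) (c : V)
    (hc : c = ((n : ℝ) + 1)⁻¹ • ∑ i, v i)
    (h : ℝ) (hh : 0 ≤ h) (hvh : ∀ i j, ‖v i - v j‖ ≤ h) :
    ∀ x ∈ convexHull ℝ (Set.range v), ‖x - c‖ ≤ ((n : ℝ) / ((n : ℝ) + 1)) * h := by
  set r : ℝ := ((n : ℝ) / ((n : ℝ) + 1)) * h with hr
  have hn1 : (0 : ℝ) < (n : ℝ) + 1 := by positivity
  -- vertices lie in the closed ball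
  have hvert : ∀ i, v i ∈ Metric.closedBall c r := by
    intro i
    rw [Metric.mem_closedBall, dist_eq_norm]
    have key : v i - c = ((n : ℝ) + 1)⁻¹ • ∑ j, (v i - v j) := by
      rw [hc,
        show (∑ j, (v i - v j)) = ((n : ℝ) + 1) • v i - ∑ j, v j by
          rw [Finset.sum_sub_distrib, Finset.sum_const, Finset.card_univ,
            Fintype.card_fin, ← Nat.cast_smul_eq_nsmul ℝ]
          push_cast; ring_nf,
        smul_sub, smul_smul, inv_mul_cancel₀ hn1.ne', one_smul]
    rw [key, norm_smul, norm_inv, Real.norm_eq_abs, abs_of_pos hn1]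
    have hb : ‖∑ j, (v i - v j)‖ ≤ (n : ℝ) * h := by
      calc ‖∑ j, (v i - v j)‖ ≤ ∑ j, ‖v i - v j‖ := norm_sum_le _ _
        _ = ∑ j ∈ Finset.univ.erase i, ‖v i - v j‖ := by
              rw [Finset.sum_erase _ (by simp)]
        _ ≤ ∑ _j ∈ Finset.univ.erase i, h := Finset.sum_le_sum fun j _ => hvh i j
        _ = (n : ℝ) * h := by
              rw [Finset.sum_const, Finset.card_erase_of_mem (Finset.mem_univ i),
                Finset.card_univ, Fintype.card_fin]
              simp [nsmul_eq_mul]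
    calc ((n : ℝ) + 1)⁻¹ * ‖∑ j, (v i - v j)‖
        ≤ ((n : ℝ) + 1)⁻¹ * ((n : ℝ) * h) := by
          exact mul_le_mul_of_nonneg_left hb (by positivity)
      _ = r := by rw [hr]; field_simp
  intro x hx
  have hsub : convexHull ℝ (Set.range v) ⊆ Metric.closedBall c r :=
    convexHull_min (by rintro _ ⟨i, rfl⟩; exact hvert i) (convex_closedBall c r)
  have := hsub hx
  rwa [Metric.mem_closedBall, dist_eq_norm] at this
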